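/- Composition preserves approximate differential privacy under the LabelBoostProcedure hypothesis-distribution coupling: if for neighboring databases there is a bijection z ↦ (outcome pairs) such that each coupled pair of relabeled databases are neighboring and the probability weights satisfy w₁(z) ≤ 4e·w₂(z), and A is (ε,δ)-differentially private, then for any event F, Pr[B(S₁) ∈ F] ≤ e^{ε+3}·Pr[B(S₂) ∈ F] + 4e·δ. -/

import Mathlib

/-- Coupled composition preserves approximate differential privacy: if `B(Sᵢ)`
first samples `z` with weight `wᵢ z` and then runs the `(ε,δ)`-private `A` on a
database `Dᵢ z`, where for every `z` the databases `D₁ z, D₂ z` are neighboring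
and `w₁ z ≤ 4e·w₂ z`, then `Pr[B(S₁) ∈ F] ≤ e^{ε+3}·Pr[B(S₂) ∈ F] + 4e·δ`. -/
theorem stmt5 {DB Ω Z : Type*} [Fintype Z]
    (Neighbor : DB → DB → Prop)
    (A : DB → Set Ω → ℝ) (ε δ : ℝ) (hδ : 0 ≤ δ)
    (hA0 : ∀ D F, 0 ≤ A D F)
    (hDP : ∀ D1 D2, Neighbor D1 D2 → ∀ F : Set Ω,
      A D1 F ≤ Real.exp ε * A D2 F + δ)
    (w1 w2 : Z → ℝ) (hw1 : ∀ z, 0 ≤ w1 z) (hw2 : ∀ z, 0 ≤ w2 z)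
    (hsum1 : ∑ z, w1 z = 1) (hsum2 : ∑ z, w2 z = 1)
    (D1 D2 : Z → DB) (hN : ∀ z, Neighbor (D1 z) (D2 z))
    (hcoupling : ∀ z, w1 z ≤ 4 * Real.exp 1 * w2 z) :
    ∀ F : Set Ω,
      ∑ z, w1 z * A (D1 z) F
        ≤ Real.exp (ε + 3) * ∑ z, w2 z * A (D2 z) F + 4 * Real.exp 1 * δ := by
  intro F
  have h4e : 4 * Real.exp 1 ≤ Real.exp 3 := by
    have h1 : (Real.exp 1)^3 = Real.exp 3 := by
      rw [← Real.exp_nat_mul]; norm_num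
    have he : (2:ℝ) ≤ Real.exp 1 := by nlinarith [Real.exp_one_gt_d9]
    have hx : (4:ℝ) ≤ Real.exp 1 * Real.exp 1 := by nlinarith [he]
    calc 4 * Real.exp 1 ≤ (Real.exp 1 * Real.exp 1) * Real.exp 1 :=
          mul_le_mul_of_nonneg_right hx (Real.exp_pos 1).le
      _ = Real.exp 3 := by rw [← h1]; ring
  have hS2 : 0 ≤ ∑ z, w2 z * A (D2 z) F :=
    Finset.sum_nonneg fun z _ => mul_nonneg (hw2 z) (hA0 _ _)
  have step1 : ∑ z, w1 z * A (D1 z) F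
      ≤ (4 * Real.exp 1 * Real.exp ε) * ∑ z, w2 z * A (D2 z) F + 4 * Real.exp 1 * δ := by
    calc ∑ z, w1 z * A (D1 z) F
        ≤ ∑ z, ((4 * Real.exp 1 * Real.exp ε) * (w2 z * A (D2 z) F) + 4 * Real.exp 1 * (w2 z * δ)) := by
          apply Finset.sum_le_sum
          intro z _
          have h1 : A (D1 z) F ≤ Real.exp ε * A (D2 z) F + δ := hDP _ _ (hN z) F
          have h2 : w1 z * A (D1 z) F ≤ w1 z * (Real.exp ε * A (D2 z) F + δ) :=
            mul_le_mul_of_nonneg_left h1 (hw1 z)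
          have h3 : w1 z * (Real.exp ε * A (D2 z) F + δ)
              ≤ (4 * Real.exp 1 * w2 z) * (Real.exp ε * A (D2 z) F + δ) := by
            apply mul_le_mul_of_nonneg_right (hcoupling z)
            exact add_nonneg (mul_nonneg (Real.exp_pos ε).le (hA0 _ _)) hδ
          calc w1 z * A (D1 z) F ≤ (4 * Real.exp 1 * w2 z) * (Real.exp ε * A (D2 z) F + δ) :=
                h2.trans h3
            _ = (4 * Real.exp 1 * Real.exp ε) * (w2 z * A (D2 z) F) + 4 * Real.exp 1 * (w2 z * δ) := by
                ring
      _ = (4 * Real.exp 1 * Real.exp ε) * ∑ z, w2 z * A (D2 z) F + 4 * Real.exp 1 * δ := by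
          rw [Finset.sum_add_distrib, ← Finset.mul_sum, ← Finset.mul_sum]
          congr 1
          rw [← Finset.sum_mul, hsum2, one_mul]
  refine step1.trans (add_le_add ?_ le_rfl)
  have : 4 * Real.exp 1 * Real.exp ε ≤ Real.exp (ε + 3) := by
    rw [Real.exp_add, mul_comm (Real.exp ε)]
    exact mul_le_mul_of_nonneg_right h4e (Real.exp_pos ε).le
  exact mul_le_mul_of_nonneg_right this hS2
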